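/- The map φ : E × E → (U → E) given by φ(a,b) = (u ↦ Tr(au⁴ + bu³)) is injective; consequently the code C_m = { (Tr(au⁴+bu³))_{u∈U} : a, b ∈ E } contains exactly q⁴ codewords, i.e., C_m has dimension 4 as a linear code over the subfield GF(q). -/

import Mathlib

open Polynomial

-- key: polynomial vanishing on ≥9 elements of U forces c = d = 0
lemma key_poly {E : Type*} [Field E] [Fintype E] [DecidableEq E] (q : ℕ)
    (hU : 9 ≤ (Finset.univ.filter (fun u : E => u ^ (q + 1) = 1)).card)
    (c d e f : E) (h : ∀ u : E, u ^ (q + 1) = 1 → c * u ^ 8 + d * u ^ 7 + e * u + f = 0) :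
    c = 0 ∧ d = 0 := by
  set P : E[X] := C c * X ^ 8 + C d * X ^ 7 + C e * X + C f with hP
  have hPz : P = 0 := by
    by_contra hP0
    have hdeg : P.natDegree ≤ 8 := by
      rw [hP]; compute_degree
    have hroots : (Finset.univ.filter (fun u : E => u ^ (q + 1) = 1)) ⊆ P.roots.toFinset := by
      intro u hu
      simp only [Finset.mem_filter] at hu
      rw [Multiset.mem_toFinset, mem_roots hP0]
      have := h u hu.2
      simp [hP, IsRoot, eval_add, eval_mul]
      linear_combination this
    have := Finset.card_le_card hroots
    have h2 : P.roots.toFinset.card ≤ Multiset.card P.roots := Multiset.toFinset_card_le _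
    have h3 : Multiset.card P.roots ≤ P.natDegree := P.card_roots'
    omega
  have hc : c = 0 := by
    have := congrArg (fun p => Polynomial.coeff p 8) hPz
    simpa [hP, coeff_add, coeff_C_mul, coeff_X_pow, coeff_C, coeff_X] using this
  have hd : d = 0 := by
    have := congrArg (fun p => Polynomial.coeff p 7) hPz
    simpa [hP, coeff_add, coeff_C_mul, coeff_X_pow, coeff_C, coeff_X] using this
  exact ⟨hc, hd⟩

lemma card_U_ge {E : Type*} [Field E] [Fintype E] [DecidableEq E] (q : ℕ) (hq49 : 49 ≤ q)
    (hE : Fintype.card E = q ^ 2) :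
    9 ≤ (Finset.univ.filter (fun u : E => u ^ (q + 1) = 1)).card := by
  obtain ⟨g, hg⟩ := IsCyclic.exists_generator (α := Eˣ)
  have horder : orderOf g = q ^ 2 - 1 := by
    rw [orderOf_eq_card_of_forall_mem_zpowers hg, Nat.card_eq_fintype_card,
      Fintype.card_units, hE]
  have hfact : q ^ 2 - 1 = (q - 1) * (q + 1) := by
    obtain ⟨k, rfl⟩ : ∃ k, q = k + 1 := ⟨q - 1, by omega⟩
    have : (k + 1) ^ 2 = k * (k + 2) + 1 := by ring
    have h2 : k + 1 - 1 = k := by omega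
    rw [h2]
    have h3 : k * (k + 2) = k * (k + 1 + 1) := by ring
    omega
  set h : Eˣ := g ^ (q - 1) with hh
  have hdvd : (q - 1) ∣ q ^ 2 - 1 := ⟨q + 1, hfact⟩
  have hordh : orderOf h = q + 1 := by
    rw [hh, orderOf_pow, horder, Nat.gcd_eq_right hdvd, hfact,
      Nat.mul_div_cancel_left _ (by omega : 0 < q - 1)]
  have hmem : ∀ i : ℕ, ((h : E)) ^ i ∈ Finset.univ.filter (fun u : E => u ^ (q + 1) = 1) := by
    intro i
    simp only [Finset.mem_filter, Finset.mem_univ, true_and]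
    have : h ^ (q + 1) = 1 := by rw [← hordh]; exact pow_orderOf_eq_one h
    rw [← pow_mul, mul_comm, pow_mul, ← Units.val_pow_eq_pow_val, this, Units.val_one, one_pow]
  have aux : ∀ i j : ℕ, i < 9 → j < 9 → i ≤ j → h ^ i = h ^ j → i = j := by
    intro i j hi hj hle huinj
    have h1 : h ^ (j - i) = 1 := by
      have h2 := huinj.symm
      rw [show j = (j - i) + i by omega, pow_add] at h2
      replace h2 := mul_right_cancel (h2.trans (one_mul _).symm)
      exact h2
    have hdvd2 := orderOf_dvd_of_pow_eq_one h1
    rw [hordh] at hdvd2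
    rcases Nat.eq_zero_of_dvd_of_lt hdvd2 (by omega) with h0
    omega
  have hinj : Set.InjOn (fun i : ℕ => ((h : E)) ^ i) (Finset.range 9) := by
    intro i hi j hj hij
    simp only [Finset.coe_range, Set.mem_Iio] at hi hj
    have huinj : h ^ i = h ^ j := by
      apply Units.ext
      push_cast
      exact hij
    rcases le_total i j with hle | hle
    · exact aux i j hi hj hle huinj
    · exact (aux j i hj hi hle huinj.symm).symm
  calc 9 = ((Finset.range 9).image (fun i : ℕ => ((h : E)) ^ i)).card := by
        rw [Finset.card_image_of_injOn hinj, Finset.card_range]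
    _ ≤ _ := Finset.card_le_card (by
        intro x hx
        simp only [Finset.mem_image] at hx
        obtain ⟨i, _, rfl⟩ := hx
        exact hmem i)



/-- the map (a,b) ↦ (Tr(au⁴+bu³))_{u∈U} is injective, hence the code
C_m has exactly q⁴ codewords (dimension 4 over GF(q)). -/
theorem stmt_8 {m : ℕ} (hm : 2 ≤ m) (q : ℕ) (hq : q = 7 ^ m)
    {E : Type*} [Field E] [Fintype E] [DecidableEq E] (hE : Fintype.card E = q ^ 2) :
    Function.Injective
      (fun p : E × E => fun u : {u : E // u ^ (q + 1) = 1} =>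
        (p.1 * (u : E) ^ 4 + p.2 * (u : E) ^ 3) +
          (p.1 * (u : E) ^ 4 + p.2 * (u : E) ^ 3) ^ q) ∧
    (Set.range
      (fun p : E × E => fun u : {u : E // u ^ (q + 1) = 1} =>
        (p.1 * (u : E) ^ 4 + p.2 * (u : E) ^ 3) +
          (p.1 * (u : E) ^ 4 + p.2 * (u : E) ^ 3) ^ q)).ncard = q ^ 4 := by
  have hq49 : 49 ≤ q := by
    rw [hq]
    calc 49 = 7 ^ 2 := by norm_num
    _ ≤ 7 ^ m := Nat.pow_le_pow_right (by norm_num) hm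
  -- characteristic 7
  haveI : Fact (Nat.Prime (ringChar E)) := ⟨CharP.char_is_prime E _⟩
  have hchar7 : ringChar E = 7 := by
    obtain ⟨n, hp, hcard⟩ := FiniteField.card E (ringChar E)
    have h72 : Fintype.card E = 7 ^ (2 * m) := by rw [hE, hq, ← pow_mul, mul_comm]
    have hd : ringChar E ∣ 7 ^ (2 * m) := by
      rw [← h72, hcard]
      exact dvd_pow_self _ n.ne_zero
    have := hp.dvd_of_dvd_pow (n := 2 * m) (m := 7) hd
    exact (Nat.prime_dvd_prime_iff_eq hp (by norm_num)).mp this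
  haveI hC7 : CharP E 7 := hchar7 ▸ ringChar.charP E
  haveI : Fact (Nat.Prime 7) := ⟨by norm_num⟩
  have hU := card_U_ge (E := E) q hq49 hE
  -- injectivity
  have hinj : Function.Injective
      (fun p : E × E => fun u : {u : E // u ^ (q + 1) = 1} =>
        (p.1 * (u : E) ^ 4 + p.2 * (u : E) ^ 3) +
          (p.1 * (u : E) ^ 4 + p.2 * (u : E) ^ 3) ^ q) := by
    intro ⟨a, b⟩ ⟨a', b'⟩ hab
    simp only [Prod.mk.injEq]
    set c := a - a' with hc
    set d := b - b' with hd
    have hzero : ∀ u : E, u ^ (q + 1) = 1 →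
        c * u ^ 8 + d * u ^ 7 + d ^ q * u + c ^ q = 0 := by
      intro u hu
      have h1 := congrFun hab ⟨u, hu⟩
      simp only at h1
      have h2 : (c * u ^ 4 + d * u ^ 3) + (c * u ^ 4 + d * u ^ 3) ^ q = 0 := by
        have hsub : (c * u ^ 4 + d * u ^ 3) =
            (a * u ^ 4 + b * u ^ 3) - (a' * u ^ 4 + b' * u ^ 3) := by
          rw [hc, hd]; ring
        rw [hsub, hq, sub_pow_char_pow (p := 7)]
        rw [hq] at h1
        linear_combination h1
      have h3 : (c * u ^ 4 + d * u ^ 3) ^ q =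
          c ^ q * (u ^ 4) ^ q + d ^ q * (u ^ 3) ^ q := by
        rw [hq, add_pow_char_pow (p := 7), mul_pow, mul_pow]
      rw [h3] at h2
      have e1 : (u ^ 4) ^ q * u ^ 4 = 1 := by
        rw [← pow_mul, ← pow_add, show 4 * q + 4 = (q + 1) * 4 by ring, pow_mul, hu, one_pow]
      have e2 : (u ^ 3) ^ q * u ^ 4 = u := by
        rw [← pow_mul, ← pow_add, show 3 * q + 4 = (q + 1) * 3 + 1 by ring, pow_add,
          pow_mul, hu, one_pow, pow_one, one_mul]
      have := congrArg (fun x => x * u ^ 4) h2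
      simp only [add_mul, zero_mul] at this
      calc c * u ^ 8 + d * u ^ 7 + d ^ q * u + c ^ q
          = c * u ^ 4 * u ^ 4 + d * u ^ 3 * u ^ 4 + c ^ q * ((u ^ 4) ^ q * u ^ 4)
            + d ^ q * ((u ^ 3) ^ q * u ^ 4) := by rw [e1, e2]; ring
        _ = 0 := by rw [← mul_assoc, ← mul_assoc]; linear_combination this
    obtain ⟨h4, h5⟩ := key_poly q hU c d (d ^ q) (c ^ q) hzero
    constructor
    · have := h4; rw [hc, sub_eq_zero] at this; exact this
    · have := h5; rw [hd, sub_eq_zero] at this; exact this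
  refine ⟨hinj, ?_⟩
  rw [← Nat.card_coe_set_eq, Nat.card_range_of_injective hinj,
    Nat.card_eq_fintype_card, Fintype.card_prod, hE]
  ring
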